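/- Let A = {0, a₁, a₂} ⊂ ℤ≥0 with gcd(a₁, a₂) = 1, and suppose the polynomial A(x) = 1 + x^{a₁} + x^{a₂} has a spectrum {θ₁, θ₂}. Then θ₁, θ₂ ∈ (1/3)ℤ, i.e., {θ₁, θ₂} = {1/3, 2/3}. -/

import Mathlib

open Complex

lemma cube_of_unit_sum (u v : ℂ) (hu : ‖u‖ = 1) (hv : ‖v‖ = 1)
    (h : 1 + u + v = 0) : v ^ 3 = 1 := by
  have hvv : v * (starRingEnd ℂ) v = 1 := by
    rw [Complex.mul_conj]
    norm_cast
    rw [Complex.normSq_eq_norm_sq, hv]; norm_num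
  have huu : u * (starRingEnd ℂ) u = 1 := by
    rw [Complex.mul_conj]
    norm_cast
    rw [Complex.normSq_eq_norm_sq, hu]; norm_num
  have hude : u = -1 - v := by linear_combination h
  rw [hude] at huu
  have hc : (starRingEnd ℂ) (-1 - v) = -1 - (starRingEnd ℂ) v := by
    simp [map_sub]
  rw [hc] at huu
  have hsum : v + (starRingEnd ℂ) v = -1 := by linear_combination huu - hvv
  have h2 : v ^ 2 + v + 1 = 0 := by linear_combination v * hsum - hvv
  linear_combination (v - 1) * h2

lemma key (a₁ a₂ : ℕ) (hcop : Nat.gcd a₁ a₂ = 1) (t : ℝ)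
    (h : 1 + Complex.exp (2 * Real.pi * Complex.I * t) ^ a₁
        + Complex.exp (2 * Real.pi * Complex.I * t) ^ a₂ = 0) :
    ∃ k : ℤ, t = (k : ℝ) / 3 := by
  set z := Complex.exp (2 * Real.pi * Complex.I * t) with hz
  have habs : ‖z‖ = 1 := by
    rw [hz, Complex.norm_exp]
    have : (2 * (Real.pi : ℂ) * Complex.I * (t : ℂ)).re = 0 := by
      simp [Complex.mul_re]
    rw [this, Real.exp_zero]
  have hu : ‖z ^ a₁‖ = 1 := by rw [norm_pow, habs, one_pow]
  have hv : ‖z ^ a₂‖ = 1 := by rw [norm_pow, habs, one_pow]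
  have h31 : (z ^ a₁) ^ 3 = 1 := cube_of_unit_sum (z ^ a₂) (z ^ a₁) hv hu (by linear_combination h)
  have h32 : (z ^ a₂) ^ 3 = 1 := cube_of_unit_sum (z ^ a₁) (z ^ a₂) hu hv h
  have e1 : Complex.exp ((3 * a₁ : ℕ) * (2 * Real.pi * Complex.I * t)) = 1 := by
    rw [Complex.exp_nat_mul, ← hz, ← pow_mul, mul_comm 3 a₁, pow_mul] at *
    exact h31
  have e2 : Complex.exp ((3 * a₂ : ℕ) * (2 * Real.pi * Complex.I * t)) = 1 := by
    rw [Complex.exp_nat_mul, ← hz, ← pow_mul, mul_comm 3 a₂, pow_mul] at *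
    exact h32
  rw [Complex.exp_eq_one_iff] at e1 e2
  obtain ⟨m, hm⟩ := e1
  obtain ⟨n, hn⟩ := e2
  have h2pi : (2 * (Real.pi : ℂ) * Complex.I) ≠ 0 := by
    simp [Real.pi_ne_zero, Complex.I_ne_zero]
  have hm' : ((3 * a₁ : ℕ) : ℂ) * t = m := by
    field_simp at hm
    push_cast at hm ⊢
    have := mul_right_cancel₀ h2pi (by push_cast; linear_combination (2 * (Real.pi : ℂ) * Complex.I) * hm : ((3 * a₁ : ℕ) : ℂ) * (t : ℂ) * (2 * (Real.pi : ℂ) * Complex.I) = (m : ℂ) * (2 * (Real.pi : ℂ) * Complex.I))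
    exact_mod_cast this
  have hn' : ((3 * a₂ : ℕ) : ℂ) * t = n := by
    field_simp at hn
    push_cast at hn ⊢
    have := mul_right_cancel₀ h2pi (by push_cast; linear_combination (2 * (Real.pi : ℂ) * Complex.I) * hn : ((3 * a₂ : ℕ) : ℂ) * (t : ℂ) * (2 * (Real.pi : ℂ) * Complex.I) = (n : ℂ) * (2 * (Real.pi : ℂ) * Complex.I))
    exact_mod_cast this
  have hmR : (3 * a₁ : ℝ) * t = m := by exact_mod_cast hm'
  have hnR : (3 * a₂ : ℝ) * t = n := by exact_mod_cast hn'
  have hbez : (1 : ℤ) = a₁ * Nat.gcdA a₁ a₂ + a₂ * Nat.gcdB a₁ a₂ := by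
    have := Nat.gcd_eq_gcd_ab a₁ a₂
    rw [hcop] at this
    exact_mod_cast this
  refine ⟨m * Nat.gcdA a₁ a₂ + n * Nat.gcdB a₁ a₂, ?_⟩
  have hbezR : (1 : ℝ) = a₁ * (Nat.gcdA a₁ a₂ : ℝ) + a₂ * (Nat.gcdB a₁ a₂ : ℝ) := by
    exact_mod_cast hbez
  push_cast
  rw [eq_div_iff (by norm_num : (3:ℝ) ≠ 0)]
  linear_combination (Nat.gcdA a₁ a₂ : ℝ) * hmR + (Nat.gcdB a₁ a₂ : ℝ) * hnR + 3 * t * hbezR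

theorem stmt17 (a₁ a₂ : ℕ) (h1 : 0 < a₁) (h12 : a₁ < a₂)
    (hcop : Nat.gcd a₁ a₂ = 1)
    (θ : Fin 3 → ℝ) (h0 : θ 0 = 0)
    (hinj : Function.Injective θ)
    (hIoo : ∀ j, j ≠ 0 → θ j ∈ Set.Ioo (0 : ℝ) 1)
    (hspec : ∀ i j, i ≠ j →
      1 + Complex.exp (2 * Real.pi * Complex.I * (θ i - θ j)) ^ a₁
        + Complex.exp (2 * Real.pi * Complex.I * (θ i - θ j)) ^ a₂ = 0) :
    (∃ k : ℤ, θ 1 = (k : ℝ) / 3) ∧ (∃ l : ℤ, θ 2 = (l : ℝ) / 3) := by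
  constructor
  · have h := hspec 1 0 (by decide)
    rw [h0] at h
    apply key a₁ a₂ hcop
    convert h using 4 <;> push_cast <;> ring
  · have h := hspec 2 0 (by decide)
    rw [h0] at h
    apply key a₁ a₂ hcop
    convert h using 4 <;> push_cast <;> ring
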